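/- Correctness of the slanted firing squad algorithm (main theorem): a point p ∈ ℝ² is an accumulation point of the set of node positions P (i.e. every neighbourhood of p contains a point of P different from p; equivalently p ∈ closure(P \ {p})) if and only if p lies on the target segment, i.e. p = (x, T(x)) for some x ∈ [−1, 1]. In other words, the derived set of P is exactly the segment of ℝ² joining (−1, s₀) to (1, t₀). -/

import Mathlib

open Set

/-- The affine function whose graph over `[-1,1]` is the target segment
joining `(-1, s₀)` to `(1, t₀)`. -/
noncomputable def Tline (s₀ t₀ x : ℝ) : ℝ := (s₀ + t₀) / 2 + ((t₀ - s₀) / 2) * x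

/-- The smallest set of nodes `((x, τ), (s, t), d)` generated by the
root, delay and split rules of the slanted firing squad algorithm. -/
inductive Node (s₀ t₀ : ℝ) : (ℝ × ℝ) × (ℝ × ℝ) × ℕ → Prop
  | root : Node s₀ t₀ ((0, 0), (s₀, t₀), 0)
  | delay {x τ s t : ℝ} {d : ℕ} :
      Node s₀ t₀ ((x, τ), (s, t), d) → 2 ≤ s → 2 ≤ t →
      Node s₀ t₀ ((x, τ + (2:ℝ)^(-(d:ℤ))), (s - 1, t - 1), d)
  | splitL {x τ s t : ℝ} {d : ℕ} :
      Node s₀ t₀ ((x, τ), (s, t), d) → s < 2 ∨ t < 2 →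
      Node s₀ t₀ ((x - (2:ℝ)^(-((d:ℤ)+1)), τ + (2:ℝ)^(-((d:ℤ)+1))),
        (2*s - 1, s + t - 1), d + 1)
  | splitR {x τ s t : ℝ} {d : ℕ} :
      Node s₀ t₀ ((x, τ), (s, t), d) → s < 2 ∨ t < 2 →
      Node s₀ t₀ ((x + (2:ℝ)^(-((d:ℤ)+1)), τ + (2:ℝ)^(-((d:ℤ)+1))),
        (s + t - 1, 2*t - 1), d + 1)

/-- The invariant maintained by all nodes. -/
def NInv (s₀ t₀ : ℝ) (q : (ℝ × ℝ) × (ℝ × ℝ) × ℕ) : Prop :=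
  1 ≤ q.2.1.1 ∧ 1 ≤ q.2.1.2 ∧ q.2.1.2 - q.2.1.1 = t₀ - s₀ ∧
  q.1.2 = Tline s₀ t₀ q.1.1 - (q.2.1.1 + q.2.1.2) / 2 * (2:ℝ)^(-(q.2.2:ℤ)) ∧
  |q.1.1| ≤ 1 - (2:ℝ)^(-(q.2.2:ℤ)) ∧ 0 ≤ q.1.2 ∧
  q.2.1.1 + q.2.1.2 ≤ 12 + 3*(s₀ + t₀)

lemma half_zpow (d : ℕ) : (2:ℝ)^(-((d:ℤ)+1)) = (2:ℝ)^(-(d:ℤ)) / 2 := by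
  rw [neg_add, zpow_add₀ (two_ne_zero), zpow_neg_one]
  ring

lemma zpow_neg_pos (d : ℕ) : 0 < (2:ℝ)^(-(d:ℤ)) := zpow_pos (by norm_num) _

lemma zpow_neg_le_one (d : ℕ) : (2:ℝ)^(-(d:ℤ)) ≤ 1 := by
  apply zpow_le_one_of_nonpos₀ (by norm_num)
  simp

lemma node_inv {s₀ t₀ : ℝ} (hs₀ : 1 ≤ s₀) (ht₀ : 1 ≤ t₀) :
    ∀ {q}, Node s₀ t₀ q → NInv s₀ t₀ q := by
  intro q h
  induction h with
  | root =>
    refine ⟨hs₀, ht₀, by ring, ?_, ?_, le_refl _, by dsimp only; nlinarith⟩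
    · simp [Tline]
    · simp
  | @delay x τ s t d h hs ht ih =>
    obtain ⟨h1, h2, h3, h4, h5, h6, h7⟩ := ih
    simp only [NInv] at *
    have e := zpow_neg_pos d
    refine ⟨by linarith, by linarith, by linarith, ?_, h5, by positivity, by linarith⟩
    rw [h4]; ring
  | @splitL x τ s t d h hc ih =>
    obtain ⟨h1, h2, h3, h4, h5, h6, h7⟩ := ih
    simp only [NInv, Nat.cast_add, Nat.cast_one] at *
    have e := zpow_neg_pos d
    have he : (2:ℝ)^(-((d:ℤ)+1)) = (2:ℝ)^(-(d:ℤ)) / 2 := half_zpow d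
    rw [he]
    refine ⟨by linarith, by linarith, by linarith, ?_, ?_, by positivity, ?_⟩
    · rw [h4]
      simp only [Tline]; linear_combination (-(2:ℝ)^(-(d:ℤ))/4) * h3
    · rw [abs_le] at h5 ⊢
      constructor <;> [linarith [h5.1]; linarith [h5.2]]
    · rcases hc with hc | hc
      · have : t < 2 + t₀ - s₀ := by linarith
        nlinarith
      · have : s < 2 - t₀ + s₀ := by linarith
        nlinarith
  | @splitR x τ s t d h hc ih =>
    obtain ⟨h1, h2, h3, h4, h5, h6, h7⟩ := ih
    simp only [NInv, Nat.cast_add, Nat.cast_one] at *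
    have e := zpow_neg_pos d
    have he : (2:ℝ)^(-((d:ℤ)+1)) = (2:ℝ)^(-(d:ℤ)) / 2 := half_zpow d
    rw [he]
    refine ⟨by linarith, by linarith, by linarith, ?_, ?_, by positivity, ?_⟩
    · rw [h4]
      simp only [Tline]; linear_combination ((2:ℝ)^(-(d:ℤ))/4) * h3
    · rw [abs_le] at h5 ⊢
      constructor <;> [linarith [h5.1]; linarith [h5.2]]
    · rcases hc with hc | hc
      · have : t < 2 + t₀ - s₀ := by linarith
        nlinarith
      · have : s < 2 - t₀ + s₀ := by linarith
        nlinarith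

lemma pow_helper (d n : ℕ) (h : d ≤ n) :
    (2:ℝ)^(-(d:ℤ)) * 2^n = ((2^(n-d) : ℤ) : ℝ) := by
  have : (2:ℝ)^n = 2^(n-d) * 2^d := (pow_sub_mul_pow (2:ℝ) h).symm
  rw [this, zpow_neg, zpow_natCast]
  push_cast
  field_simp

lemma node_dyadic {s₀ t₀ : ℝ} :
    ∀ {q}, Node s₀ t₀ q → ∀ n : ℕ, q.2.2 ≤ n →
      (∃ a : ℤ, q.1.1 * 2^n = a) ∧ (∃ b : ℤ, q.1.2 * 2^n = b) := by
  intro q h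
  induction h with
  | root => exact fun n _ => ⟨⟨0, by simp⟩, ⟨0, by simp⟩⟩
  | @delay x τ s t d h hs ht ih =>
    intro n hn
    simp only at hn ⊢
    obtain ⟨⟨a, ha⟩, ⟨b, hb⟩⟩ := ih n hn
    refine ⟨⟨a, ha⟩, ⟨b + 2^(n-d), ?_⟩⟩
    push_cast
    rw [add_mul, hb, pow_helper d n hn]
    push_cast
    ring
  | @splitL x τ s t d h hc ih =>
    intro n hn
    simp only at hn ⊢
    have hdn : d ≤ n := le_trans (Nat.le_succ d) hn
    obtain ⟨⟨a, ha⟩, ⟨b, hb⟩⟩ := ih n hdn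
    have he : (-(((d:ℕ)+1:ℕ):ℤ)) = -((d:ℤ)+1) := by push_cast; ring
    have hp := pow_helper (d+1) n hn
    rw [he] at hp
    refine ⟨⟨a - 2^(n-(d+1)), ?_⟩, ⟨b + 2^(n-(d+1)), ?_⟩⟩
    · push_cast
      rw [sub_mul, ha, hp]; push_cast; ring
    · push_cast
      rw [add_mul, hb, hp]; push_cast; ring
  | @splitR x τ s t d h hc ih =>
    intro n hn
    simp only at hn ⊢
    have hdn : d ≤ n := le_trans (Nat.le_succ d) hn
    obtain ⟨⟨a, ha⟩, ⟨b, hb⟩⟩ := ih n hdn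
    have he : (-(((d:ℕ)+1:ℕ):ℤ)) = -((d:ℤ)+1) := by push_cast; ring
    have hp := pow_helper (d+1) n hn
    rw [he] at hp
    refine ⟨⟨a + 2^(n-(d+1)), ?_⟩, ⟨b + 2^(n-(d+1)), ?_⟩⟩
    · push_cast
      rw [add_mul, ha, hp]; push_cast; ring
    · push_cast
      rw [add_mul, hb, hp]; push_cast; ring

lemma finite_low {s₀ t₀ : ℝ} (hs₀ : 1 ≤ s₀) (ht₀ : 1 ≤ t₀) (n : ℕ) :
    Set.Finite {q : ℝ × ℝ | ∃ s t : ℝ, ∃ d : ℕ, d ≤ n ∧ Node s₀ t₀ (q, (s, t), d)} := by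
  set M : ℤ := ⌈s₀ + t₀⌉ with hM
  apply Set.Finite.subset
    (((Set.finite_Icc ((-(2^n) : ℤ), (0:ℤ)) ((2^n : ℤ), M * 2^n))).image
      (fun ab : ℤ × ℤ => (((ab.1:ℝ))/2^n, ((ab.2:ℝ))/2^n)))
  rintro ⟨qx, qτ⟩ ⟨s, t, d, hd, hnode⟩
  obtain ⟨⟨a, ha⟩, ⟨b, hb⟩⟩ := node_dyadic hnode n hd
  simp only at ha hb
  obtain ⟨h1, h2, h3, h4, h5, h6, h7⟩ := node_inv hs₀ ht₀ hnode
  simp only [NInv] at h1 h2 h3 h4 h5 h6 h7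
  have e := zpow_neg_pos d
  have e1 := zpow_neg_le_one d
  have hx1 : |qx| ≤ 1 := by linarith
  rw [abs_le] at hx1
  have hτub : qτ ≤ s₀ + t₀ := by
    have hT : Tline s₀ t₀ qx ≤ s₀ + t₀ := by
      simp only [Tline]
      rcases le_total 0 ((t₀ - s₀)/2) with hS | hS
      · nlinarith [hx1.2]
      · nlinarith [hx1.1]
    nlinarith
  have h2n : (0:ℝ) < 2^n := by positivity
  refine ⟨(a, b), ?_, ?_⟩
  · simp only [Set.mem_Icc, Prod.le_def]
    refine ⟨⟨?_, ?_⟩, ⟨?_, ?_⟩⟩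
    · have : (-(2^n) : ℝ) ≤ a := by rw [← ha]; nlinarith [hx1.1]
      exact_mod_cast this
    · have : (0:ℝ) ≤ b := by rw [← hb]; positivity
      exact_mod_cast this
    · have : (a:ℝ) ≤ 2^n := by rw [← ha]; nlinarith [hx1.2]
      exact_mod_cast this
    · have : (b:ℝ) ≤ M * 2^n := by
        rw [← hb]
        have : (s₀ + t₀) ≤ (M:ℝ) := Int.le_ceil _
        nlinarith
      exact_mod_cast this
  · simp only [Prod.mk.injEq]
    constructor
    · field_simp [← ha]
      rw [← ha]; ring
    · field_simp [← hb]
      rw [← hb]; ring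

lemma exists_split {s₀ t₀ : ℝ} :
    ∀ n : ℕ, ∀ x τ s t : ℝ, ∀ d : ℕ, s + t ≤ n → Node s₀ t₀ ((x, τ), (s, t), d) →
      ∃ τ' s' t', Node s₀ t₀ ((x, τ'), (s', t'), d) ∧ (s' < 2 ∨ t' < 2) := by
  intro n
  induction n with
  | zero =>
    intro x τ s t d hle h
    by_cases hc : s < 2 ∨ t < 2
    · exact ⟨τ, s, t, h, hc⟩
    · push_neg at hc
      norm_num at hle
      linarith [hc.1, hc.2]
  | succ n ih =>
    intro x τ s t d hle h
    by_cases hc : s < 2 ∨ t < 2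
    · exact ⟨τ, s, t, h, hc⟩
    · push_neg at hc
      have := Node.delay h hc.1 hc.2
      obtain ⟨τ', s', t', h', hc'⟩ := ih x _ _ _ d (by push_cast at hle; linarith) this
      exact ⟨τ', s', t', h', hc'⟩

lemma exists_near {s₀ t₀ : ℝ} (y : ℝ) (hy : |y| ≤ 1) :
    ∀ d : ℕ, ∃ x τ s t : ℝ, Node s₀ t₀ ((x, τ), (s, t), d) ∧ |y - x| ≤ (2:ℝ)^(-(d:ℤ)) := by
  intro d
  induction d with
  | zero => exact ⟨0, 0, s₀, t₀, Node.root, by simpa using hy⟩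
  | succ d ih =>
    obtain ⟨x, τ, s, t, h, hx⟩ := ih
    obtain ⟨τ', s', t', h', hc⟩ := exists_split ⌈s + t⌉₊ x τ s t d (Nat.le_ceil _) h
    have he : (2:ℝ)^(-((d:ℤ)+1)) = (2:ℝ)^(-(d:ℤ)) / 2 := half_zpow d
    have he2 : (-(((d:ℕ)+1:ℕ):ℤ)) = -((d:ℤ)+1) := by push_cast; ring
    rcases le_total y x with hyx | hyx
    · refine ⟨x - (2:ℝ)^(-((d:ℤ)+1)), _, _, _, Node.splitL h' hc, ?_⟩
      rw [he2, he]
      rw [abs_le] at hx ⊢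
      constructor <;> [linarith [hx.1]; linarith [hx.2]]
    · refine ⟨x + (2:ℝ)^(-((d:ℤ)+1)), _, _, _, Node.splitR h' hc, ?_⟩
      rw [he2, he]
      rw [abs_le] at hx ⊢
      constructor <;> [linarith [hx.1]; linarith [hx.2]]

lemma two_zpow_eq (n : ℕ) : (2:ℝ)^(-(n:ℤ)) = (1/2)^n := by
  rw [zpow_neg, zpow_natCast, one_div, inv_pow]

theorem stmt18 (s₀ t₀ : ℝ) (hs₀ : 1 ≤ s₀) (ht₀ : 1 ≤ t₀) (p : ℝ × ℝ) :
    p ∈ closure ({q : ℝ × ℝ | ∃ s t : ℝ, ∃ d : ℕ, Node s₀ t₀ (q, (s, t), d)} \ {p})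
    ↔ ∃ x ∈ Set.Icc (-1 : ℝ) 1, p = (x, Tline s₀ t₀ x) := by
  set U : ℝ := 12 + 3*(s₀ + t₀) with hU
  clear_value U
  have hU0 : 0 < U := by rw [hU]; linarith
  constructor
  · -- accumulation point → on segment
    intro hp
    set Seg : Set (ℝ × ℝ) := (fun x : ℝ => (x, Tline s₀ t₀ x)) '' (Set.Icc (-1) 1) with hSeg
    have hSegClosed : IsClosed Seg := by
      apply IsCompact.isClosed
      apply isCompact_Icc.image
      exact continuous_id.prodMk (by unfold Tline; fun_prop)
    have hpSeg : p ∈ Seg := by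
      rw [← hSegClosed.closure_eq, Metric.mem_closure_iff]
      intro ε hε
      obtain ⟨n, hn⟩ := exists_pow_lt_of_lt_one
        (show (0:ℝ) < (ε/2)/U by positivity) (by norm_num : (1:ℝ)/2 < 1)
      have h2n : U * (2:ℝ)^(-(n:ℤ)) < ε/2 := by
        rw [two_zpow_eq]
        calc U * (1/2:ℝ)^n < U * ((ε/2)/U) := by
              apply mul_lt_mul_of_pos_left hn hU0
          _ = ε/2 := by field_simp
      set F : Set (ℝ × ℝ) :=
        {q : ℝ × ℝ | ∃ s t : ℝ, ∃ d : ℕ, d ≤ n ∧ Node s₀ t₀ (q, (s, t), d)} with hF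
      have hFfin : (F \ {p}).Finite := (finite_low hs₀ ht₀ n).diff
      have hFc : IsClosed (F \ {p}) := hFfin.isClosed
      have hpnF : p ∈ (F \ {p})ᶜ := fun hmem => hmem.2 rfl
      obtain ⟨r₀, hr₀, hball⟩ := Metric.isOpen_iff.mp hFc.isOpen_compl p hpnF
      set r := min r₀ (ε/2) with hr
      have hrpos : 0 < r := lt_min hr₀ (by positivity)
      obtain ⟨q, ⟨hqP, hqne⟩, hdq⟩ := Metric.mem_closure_iff.mp hp r hrpos
      obtain ⟨qx, qτ⟩ := q
      simp only [Set.mem_singleton_iff] at hqne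
      obtain ⟨s, t, d, hnode⟩ := hqP
      have hqnF : (qx, qτ) ∉ F \ {p} := by
        apply hball
        rw [Metric.mem_ball, dist_comm]
        exact lt_of_lt_of_le hdq (min_le_left _ _)
      have hdn : ¬ d ≤ n := by
        intro hdle
        exact hqnF ⟨⟨s, t, d, hdle, hnode⟩, hqne⟩
      push_neg at hdn
      have h2d : (2:ℝ)^(-(d:ℤ)) ≤ (2:ℝ)^(-(n:ℤ)) := by
        apply zpow_le_zpow_right₀ one_le_two
        omega
      obtain ⟨h1, h2, h3, h4, h5, h6, h7⟩ := node_inv hs₀ ht₀ hnode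
      simp only [NInv] at h1 h2 h3 h4 h5 h6 h7
      have e := zpow_neg_pos d
      have e1 := zpow_neg_le_one d
      refine ⟨(qx, Tline s₀ t₀ qx), ⟨qx, ?_, rfl⟩, ?_⟩
      · rw [Set.mem_Icc, ← abs_le]
        linarith
      · have hdz : dist (qx, qτ) ((qx, Tline s₀ t₀ qx) : ℝ × ℝ) < ε/2 := by
          rw [Prod.dist_eq]
          simp only [dist_self, Real.dist_eq]
          rw [max_eq_right (abs_nonneg _)]
          have : qτ - Tline s₀ t₀ qx = -((s + t)/2 * (2:ℝ)^(-(d:ℤ))) := by rw [h4]; ring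
          rw [this, abs_neg, abs_of_nonneg (by positivity)]
          have hst : (s + t)/2 * (2:ℝ)^(-(d:ℤ)) ≤ U * (2:ℝ)^(-(n:ℤ)) :=
            calc (s + t)/2 * (2:ℝ)^(-(d:ℤ)) ≤ U * (2:ℝ)^(-(d:ℤ)) :=
                  mul_le_mul_of_nonneg_right (by rw [hU]; linarith) e.le
              _ ≤ U * (2:ℝ)^(-(n:ℤ)) := mul_le_mul_of_nonneg_left h2d hU0.le
          linarith
        calc dist p ((qx, Tline s₀ t₀ qx) : ℝ × ℝ)
            ≤ dist p ((qx, qτ) : ℝ × ℝ) + dist ((qx, qτ) : ℝ × ℝ) ((qx, Tline s₀ t₀ qx) : ℝ × ℝ) :=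
              dist_triangle _ _ _
          _ < r + ε/2 := by exact add_lt_add_of_lt_of_le hdq (le_of_lt hdz)
          _ ≤ ε/2 + ε/2 := by
              have := min_le_right r₀ (ε/2)
              linarith
          _ = ε := by ring
    obtain ⟨x, hx, hxe⟩ := hpSeg
    exact ⟨x, hx, hxe.symm⟩
  · -- on segment → accumulation point
    rintro ⟨y, hy, rfl⟩
    rw [Metric.mem_closure_iff]
    intro ε hε
    set C : ℝ := 1 + |t₀ - s₀|/2 + U/2 with hC
    clear_value C
    have hC1 : 1 ≤ C := by rw [hC]; have := abs_nonneg (t₀ - s₀); linarith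
    have hC0 : 0 < C := by linarith
    obtain ⟨n, hn⟩ := exists_pow_lt_of_lt_one
      (show (0:ℝ) < ε/C by positivity) (by norm_num : (1:ℝ)/2 < 1)
    have h2n : (2:ℝ)^(-(n:ℤ)) < ε/C := by rw [two_zpow_eq]; exact hn
    obtain ⟨x, τ, s, t, hnode, hx⟩ := exists_near y (abs_le.mpr hy) n
    obtain ⟨h1, h2, h3, h4, h5, h6, h7⟩ := node_inv hs₀ ht₀ hnode
    simp only [NInv] at h1 h2 h3 h4 h5 h6 h7
    have e := zpow_neg_pos n
    have hCe : C * (2:ℝ)^(-(n:ℤ)) < ε := by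
      rw [← lt_div_iff₀' hC0]
      exact h2n
    have hτlt : τ < Tline s₀ t₀ x := by
      rw [h4]; nlinarith
    refine ⟨(x, τ), ⟨⟨s, t, n, hnode⟩, ?_⟩, ?_⟩
    · simp only [Set.mem_singleton_iff, Prod.mk.injEq, not_and]
      intro hxy hτ
      rw [hxy] at hτlt
      linarith [hτlt, hτ.symm.le]
    · rw [Prod.dist_eq]
      simp only [Real.dist_eq]
      apply max_lt
      · calc |y - x| ≤ (2:ℝ)^(-(n:ℤ)) := hx
          _ ≤ C * (2:ℝ)^(-(n:ℤ)) := le_mul_of_one_le_left e.le hC1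
          _ < ε := hCe
      · have hTyx : |Tline s₀ t₀ y - Tline s₀ t₀ x| ≤ |t₀ - s₀|/2 * (2:ℝ)^(-(n:ℤ)) := by
          have hrw : Tline s₀ t₀ y - Tline s₀ t₀ x = (t₀ - s₀)/2 * (y - x) := by
            simp only [Tline]; ring
          rw [hrw, abs_mul]
          have : |(t₀ - s₀)/2| = |t₀ - s₀|/2 := by rw [abs_div]; norm_num
          rw [this]
          exact mul_le_mul_of_nonneg_left hx (by positivity)
        have hrw2 : Tline s₀ t₀ y - τ
            = (Tline s₀ t₀ y - Tline s₀ t₀ x) + (s + t)/2 * (2:ℝ)^(-(n:ℤ)) := by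
          rw [h4]; ring
        calc |Tline s₀ t₀ y - τ|
            ≤ |Tline s₀ t₀ y - Tline s₀ t₀ x| + |(s + t)/2 * (2:ℝ)^(-(n:ℤ))| := by
              rw [hrw2]; exact abs_add_le _ _
          _ ≤ |t₀ - s₀|/2 * (2:ℝ)^(-(n:ℤ)) + (s + t)/2 * (2:ℝ)^(-(n:ℤ)) := by
              rw [abs_of_nonneg (mul_nonneg (by linarith) e.le)]
              linarith
          _ = (|t₀ - s₀|/2 + (s + t)/2) * (2:ℝ)^(-(n:ℤ)) := by ring
          _ ≤ C * (2:ℝ)^(-(n:ℤ)) :=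
              mul_le_mul_of_nonneg_right (by rw [hC, hU]; linarith) e.le
          _ < ε := hCe
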